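/- Let C be a transrational polyhedral (TRP) subset of ℝⁿ, i.e., an intersection of finitely many half-spaces {x : a·x + b ≥ 0} with a ∈ ℤⁿ and b ∈ ℝ. Let f : C → ℝ be a function that is convex transintegral polyhedral in dimension 1: for every x ∈ C and a ∈ ℚⁿ, the function t ↦ f(x + ta) on the interval I_{x,a} = {t ∈ ℝ : x + ta ∈ C} is continuous, convex, piecewise affine with slopes in a₁ℤ + ⋯ + aₙℤ, and has only finitely many slopes. Then f itself is convex on C; that is, t·f(x) + (1−t)·f(y) ≥ f(tx + (1−t)y) for all x, y ∈ C and t ∈ [0,1]. -/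

import Mathlib

open Finset


lemma ratKernelApprox {ι : Type} [Fintype ι] [DecidableEq ι] {K : ℕ}
    (M : Matrix ι (Fin K) ℚ) (μ : Fin K → ℝ)
    (hμ : (M.map ((↑) : ℚ → ℝ)).mulVec μ = 0) {ε : ℝ} (hε : 0 < ε) :
    ∃ β : Fin K → ℚ, (M.map ((↑) : ℚ → ℝ)).mulVec (fun j => (β j : ℝ)) = 0 ∧
      ∀ j, |(β j : ℝ) - μ j| < ε := by
  classical
  set F : (Fin K → ℚ) →ₗ[ℚ] (ι → ℚ) := Matrix.toLin' M with hF
  obtain ⟨W', hW'⟩ := (LinearMap.ker F).exists_isCompl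
  set π : (Fin K → ℚ) →ₗ[ℚ] (Fin K → ℚ) :=
    (LinearMap.ker F).subtype ∘ₗ ((LinearMap.ker F).linearProjOfIsCompl W' hW') with hπ
  have hπmem : ∀ v, π v ∈ LinearMap.ker F := fun v =>
    ((LinearMap.ker F).linearProjOfIsCompl W' hW' v).2
  have hπid : ∀ w ∈ LinearMap.ker F, π w = w := by
    intro w hw
    have := Submodule.linearProjOfIsCompl_apply_left hW' ⟨w, hw⟩
    simp only [hπ, LinearMap.comp_apply]
    exact congrArg Subtype.val this
  set g : (Fin K → ℚ) →ₗ[ℚ] (Fin K → ℚ) := LinearMap.id - π with hg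
  have hker : LinearMap.ker F ≤ LinearMap.ker g := by
    intro w hw
    simp [hg, LinearMap.mem_ker, hπid w hw]
  obtain ⟨R', hR'⟩ := (LinearMap.range F).exists_isCompl
  set X : (ι → ℚ) →ₗ[ℚ] (Fin K → ℚ) :=
    ((LinearMap.ker F).liftQ g hker) ∘ₗ (F.quotKerEquivRange.symm : _ →ₗ[ℚ] _) ∘ₗ
      ((LinearMap.range F).linearProjOfIsCompl R' hR') with hX
  have hXF : ∀ v, X (F v) = g v := by
    intro v
    have h1 : (LinearMap.range F).linearProjOfIsCompl R' hR' (F v)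
        = ⟨F v, LinearMap.mem_range_self F v⟩ :=
      Submodule.linearProjOfIsCompl_apply_left hR' ⟨F v, LinearMap.mem_range_self F v⟩
    have h2 := LinearMap.quotKerEquivRange_symm_apply_image F v (LinearMap.mem_range_self F v)
    simp only [hX, LinearMap.comp_apply, h1, LinearEquiv.coe_coe]
    rw [h2]
    simp [Submodule.mkQ_apply]
  set Pm := LinearMap.toMatrix' π with hPm
  set Xm := LinearMap.toMatrix' X with hXm
  have hMP : M * Pm = 0 := by
    apply Matrix.toLin'.injective
    rw [Matrix.toLin'_mul]
    apply LinearMap.ext; intro v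
    have : Matrix.toLin' Pm v = π v := by rw [hPm, Matrix.toLin'_toMatrix']
    simp only [LinearMap.comp_apply, this, map_zero, LinearMap.zero_apply]
    exact hπmem v
  have hXM : (1 : Matrix (Fin K) (Fin K) ℚ) - Pm = Xm * M := by
    apply Matrix.toLin'.injective
    rw [map_sub, Matrix.toLin'_mul, Matrix.toLin'_one, hPm, hXm,
      Matrix.toLin'_toMatrix', Matrix.toLin'_toMatrix']
    apply LinearMap.ext; intro v
    simpa [hg, hF] using (hXF v).symm
  -- pass to ℝ
  have castfun : ((↑) : ℚ → ℝ) = ⇑(Rat.castHom ℝ) := rfl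
  have hMPr : (M.map ((↑) : ℚ → ℝ)) * (Pm.map ((↑) : ℚ → ℝ)) = 0 := by
    rw [castfun, ← Matrix.map_mul, hMP]
    simp
  have hXMr : (1 : Matrix (Fin K) (Fin K) ℝ) - Pm.map ((↑) : ℚ → ℝ)
      = (Xm.map ((↑) : ℚ → ℝ)) * (M.map ((↑) : ℚ → ℝ)) := by
    rw [castfun, ← Matrix.map_mul, ← hXM]
    have : ((1 : Matrix (Fin K) (Fin K) ℚ) - Pm).map ⇑(Rat.castHom ℝ)
        = (1 : Matrix (Fin K) (Fin K) ℚ).map ⇑(Rat.castHom ℝ) - Pm.map ⇑(Rat.castHom ℝ) :=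
      Matrix.map_sub _ (by simp) _ _
    rw [this, Matrix.map_one _ (by simp) (by simp)]
  have hfix : (Pm.map ((↑) : ℚ → ℝ)).mulVec μ = μ := by
    have h0 : ((1 : Matrix (Fin K) (Fin K) ℝ) - Pm.map ((↑) : ℚ → ℝ)).mulVec μ = 0 := by
      rw [hXMr, ← Matrix.mulVec_mulVec, hμ, Matrix.mulVec_zero]
    rw [Matrix.sub_mulVec, Matrix.one_mulVec, sub_eq_zero] at h0
    exact h0.symm
  set Mb : ℝ := 1 + ∑ j, ∑ l, |((Pm j l : ℝ))| with hMb
  have hMbpos : 0 < Mb := by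
    have : (0:ℝ) ≤ ∑ j, ∑ l, |((Pm j l : ℝ))| :=
      Finset.sum_nonneg fun j _ => Finset.sum_nonneg fun l _ => abs_nonneg _
    linarith
  have hrow : ∀ j, ∑ l, |((Pm j l : ℝ))| < Mb := by
    intro j
    have : ∑ l, |((Pm j l : ℝ))| ≤ ∑ j', ∑ l, |((Pm j' l : ℝ))| :=
      Finset.single_le_sum (f := fun j' => ∑ l, |((Pm j' l : ℝ))|)
        (fun j' _ => Finset.sum_nonneg fun l _ => abs_nonneg _) (Finset.mem_univ j)
    linarith
  have hεM : 0 < ε / Mb := div_pos hε hMbpos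
  choose σ hσ using fun l => exists_rat_near (K := ℝ) (μ l) hεM
  refine ⟨Pm.mulVec σ, ?_, ?_⟩
  · have hcast : (fun j => ((Pm.mulVec σ j : ℚ) : ℝ))
        = (Pm.map ((↑) : ℚ → ℝ)).mulVec (fun l => ((σ l : ℝ))) := by
      funext j
      simp only [Matrix.mulVec, dotProduct, Matrix.map_apply]
      push_cast
      ring
    rw [hcast, Matrix.mulVec_mulVec, hMPr, Matrix.zero_mulVec]
  · intro j
    have hjf : ((Pm.mulVec σ j : ℚ) : ℝ) - μ j
        = ∑ l, (Pm j l : ℝ) * ((σ l : ℝ) - μ l) := by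
      have h1 : ((Pm.mulVec σ j : ℚ) : ℝ) = ∑ l, (Pm j l : ℝ) * (σ l : ℝ) := by
        simp only [Matrix.mulVec, dotProduct]
        push_cast; ring
      have h2 : μ j = ∑ l, (Pm j l : ℝ) * μ l := by
        conv_lhs => rw [← hfix]
        simp [Matrix.mulVec, dotProduct, Matrix.map_apply]
      rw [h1]
      conv_lhs => rw [h2]
      rw [← Finset.sum_sub_distrib]
      exact Finset.sum_congr rfl fun l _ => by ring
    rw [hjf]
    calc |∑ l, (Pm j l : ℝ) * ((σ l : ℝ) - μ l)|
        ≤ ∑ l, |(Pm j l : ℝ) * ((σ l : ℝ) - μ l)| := Finset.abs_sum_le_sum_abs _ _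
      _ ≤ ∑ l, |(Pm j l : ℝ)| * (ε / Mb) := by
          refine Finset.sum_le_sum fun l _ => ?_
          rw [abs_mul]
          refine mul_le_mul_of_nonneg_left ?_ (abs_nonneg _)
          rw [abs_sub_comm]
          exact (hσ l).le
      _ = (∑ l, |(Pm j l : ℝ)|) * (ε / Mb) := by rw [Finset.sum_mul]
      _ < Mb * (ε / Mb) := by
          exact mul_lt_mul_of_pos_right (hrow j) hεM
      _ = ε := by field_simp
lemma ratConeApprox {ι : Type} [Fintype ι] [DecidableEq ι] {K : ℕ}
    (M : Matrix ι (Fin K) ℚ) (μ : Fin K → ℝ)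
    (hμ : ∀ i, 0 ≤ (M.map ((↑) : ℚ → ℝ)).mulVec μ i) {ε : ℝ} (hε : 0 < ε) :
    ∃ β : Fin K → ℚ, (∀ i, 0 ≤ (M.map ((↑) : ℚ → ℝ)).mulVec (fun j => (β j : ℝ)) i) ∧
      ∀ j, |(β j : ℝ) - μ j| < ε := by
  classical
  set v : ι → ℝ := (M.map ((↑) : ℚ → ℝ)).mulVec μ with hv
  set G : Finset ι := Finset.univ.filter (fun i => v i ≠ 0) with hG
  set S : ι → ℝ := fun i => ∑ j, |((M i j : ℝ))| with hS
  set δf : ι → ℝ := fun i => v i / (1 + S i) with hδf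
  set ε₂ : ℝ := if h : G.Nonempty then min ε (G.inf' h δf) else ε with hε₂
  have hSnn : ∀ i, 0 ≤ S i := fun i => Finset.sum_nonneg fun j _ => abs_nonneg _
  have hε₂pos : 0 < ε₂ := by
    rw [hε₂]; split
    · rename_i h
      refine lt_min hε ?_
      rw [Finset.lt_inf'_iff]
      intro i hi
      have hvi : v i ≠ 0 := (Finset.mem_filter.mp hi).2
      have : 0 < v i := lt_of_le_of_ne (hμ i) (Ne.symm hvi)
      exact div_pos this (by linarith [hSnn i])
    · exact hε
  have hε₂ε : ε₂ ≤ ε := by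
    rw [hε₂]; split
    · exact min_le_left _ _
    · exact le_refl _
  set M' : Matrix {i : ι // v i = 0} (Fin K) ℚ := Matrix.of (fun i j => M i.1 j) with hM'
  have hrowval : ∀ (w : Fin K → ℝ) (i : {i : ι // v i = 0}),
      (M'.map ((↑) : ℚ → ℝ)).mulVec w i = (M.map ((↑) : ℚ → ℝ)).mulVec w i.1 := by
    intro w i; rfl
  have hμ' : (M'.map ((↑) : ℚ → ℝ)).mulVec μ = 0 := by
    funext i
    rw [hrowval]
    exact i.2
  obtain ⟨β, hβ0, hβnear⟩ := ratKernelApprox M' μ hμ' hε₂pos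
  refine ⟨β, ?_, fun j => lt_of_lt_of_le (hβnear j) hε₂ε⟩
  intro i
  by_cases hv0 : v i = 0
  · have := congrFun hβ0 (⟨i, hv0⟩ : {i : ι // v i = 0})
    rw [hrowval] at this
    simp only [Pi.zero_apply] at this
    rw [this]
  · have hvi : 0 < v i := lt_of_le_of_ne (hμ i) (Ne.symm hv0)
    have hGne : G.Nonempty := ⟨i, Finset.mem_filter.mpr ⟨Finset.mem_univ i, hv0⟩⟩
    have hδ : ε₂ ≤ δf i := by
      rw [hε₂, dif_pos hGne]
      exact le_trans (min_le_right _ _)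
        (Finset.inf'_le δf (Finset.mem_filter.mpr ⟨Finset.mem_univ i, hv0⟩))
    have hδ2 : ε₂ * (1 + S i) ≤ v i := by
      rw [hδf] at hδ
      have h1 : (0:ℝ) < 1 + S i := by linarith [hSnn i]
      calc ε₂ * (1 + S i) ≤ (v i / (1 + S i)) * (1 + S i) :=
            mul_le_mul_of_nonneg_right hδ h1.le
        _ = v i := by field_simp
    have hdiff : (M.map ((↑) : ℚ → ℝ)).mulVec (fun j => (β j : ℝ)) i - v i
        = ∑ j, (M i j : ℝ) * ((β j : ℝ) - μ j) := by
      rw [hv]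
      simp only [Matrix.mulVec, dotProduct, Matrix.map_apply]
      rw [← Finset.sum_sub_distrib]
      exact Finset.sum_congr rfl fun j _ => by ring
    have hbnd : |∑ j, (M i j : ℝ) * ((β j : ℝ) - μ j)| ≤ S i * ε₂ := by
      calc |∑ j, (M i j : ℝ) * ((β j : ℝ) - μ j)|
          ≤ ∑ j, |(M i j : ℝ) * ((β j : ℝ) - μ j)| := Finset.abs_sum_le_sum_abs _ _
        _ ≤ ∑ j, |(M i j : ℝ)| * ε₂ := by
            refine Finset.sum_le_sum fun j _ => ?_
            rw [abs_mul]
            exact mul_le_mul_of_nonneg_left (hβnear j).le (abs_nonneg _)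
        _ = S i * ε₂ := by rw [hS, Finset.sum_mul]
    have := abs_le.mp hbnd
    have := hdiff
    nlinarith [hSnn i, hε₂pos]
lemma core_est (D βr P δstar h : ℝ) (hD : D ≠ 0) (hδ : 0 < δstar)
    (hh1 : |h| < |D| / (2 * (1 + |βr|)))
    (hh2 : |h| < δstar * |D| / (2 * (1 + |P|)))
    (hsgn : 0 < (-h * P) * D) :
    D + h * βr ≠ 0 ∧ 0 < (-h * P) / (D + h * βr) ∧ (-h * P) / (D + h * βr) < δstar := by
  have hb0 : (0:ℝ) < 1 + |βr| := by positivity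
  have hP0 : (0:ℝ) < 1 + |P| := by positivity
  have habs : 0 < |D| := abs_pos.mpr hD
  have hhb : |h * βr| < |D| / 2 := by
    rw [abs_mul]
    calc |h| * |βr| ≤ |h| * (1 + |βr|) :=
          mul_le_mul_of_nonneg_left (by linarith) (abs_nonneg h)
      _ < (|D| / (2 * (1 + |βr|))) * (1 + |βr|) := mul_lt_mul_of_pos_right hh1 hb0
      _ = |D| / 2 := by field_simp
  have hNabs : |(-h * P)| < δstar * |D| / 2 := by
    rw [abs_mul, abs_neg]
    calc |h| * |P| ≤ |h| * (1 + |P|) :=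
          mul_le_mul_of_nonneg_left (by linarith) (abs_nonneg h)
      _ < (δstar * |D| / (2 * (1 + |P|))) * (1 + |P|) := mul_lt_mul_of_pos_right hh2 hP0
      _ = δstar * |D| / 2 := by field_simp
  have hhb' := abs_lt.mp hhb
  have hdenD : 0 < (D + h * βr) * D := by
    rcases lt_or_gt_of_ne hD with hDneg | hDpos
    · have hDa : |D| = -D := abs_of_neg hDneg
      rw [hDa] at hhb'
      nlinarith
    · have hDa : |D| = D := abs_of_pos hDpos
      rw [hDa] at hhb'
      nlinarith
  have hden0 : D + h * βr ≠ 0 := by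
    intro h0
    rw [h0, zero_mul] at hdenD
    exact lt_irrefl 0 hdenD
  have hdenabs : |D| / 2 < |D + h * βr| := by
    have h1 : |D| - |D + h * βr| ≤ |D - (D + h * βr)| := abs_sub_abs_le_abs_sub _ _
    have h2 : D - (D + h * βr) = -(h * βr) := by ring
    rw [h2, abs_neg] at h1
    linarith
  have hdenabs0 : 0 < |D + h * βr| := by linarith
  have hNden : 0 < (-h * P) * (D + h * βr) := by
    nlinarith [mul_pos hsgn hdenD, sq_nonneg D, sq_abs D]
  refine ⟨hden0, ?_, ?_⟩
  · rw [div_pos_iff]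
    rcases mul_pos_iff.mp hNden with ⟨h1, h2⟩ | ⟨h1, h2⟩
    · exact Or.inl ⟨h1, h2⟩
    · exact Or.inr ⟨h1, h2⟩
  · have h1 : (-h * P) / (D + h * βr) ≤ |(-h * P) / (D + h * βr)| := le_abs_self _
    rw [abs_div] at h1
    have h2 : |(-h * P)| / |D + h * βr| < δstar := by
      rw [div_lt_iff₀ hdenabs0]
      nlinarith
    linarith

lemma pick_s (P β0r βr lam0 δstar : ℝ) (hP : P ≠ 0) (hδ : 0 < δstar)
    (hne : P * β0r ≠ lam0 * βr) :
    ∃ ρ : ℚ, ((ρ:ℝ) * βr - β0r ≠ 0) ∧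
      0 < (lam0 - (ρ:ℝ) * P) / ((ρ:ℝ) * βr - β0r) ∧
      (lam0 - (ρ:ℝ) * P) / ((ρ:ℝ) * βr - β0r) < δstar := by
  set ρ₀ : ℝ := lam0 / P with hρ₀
  have hlam0 : lam0 = ρ₀ * P := by rw [hρ₀, div_mul_cancel₀ _ hP]
  set D : ℝ := ρ₀ * βr - β0r with hD'
  have hD : D ≠ 0 := by
    intro h0
    apply hne
    have hβ0r : β0r = ρ₀ * βr := by rw [hD'] at h0; linarith
    rw [hβ0r, hlam0]; ring
  have hDa : 0 < |D| := abs_pos.mpr hD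
  set hm : ℝ := min (|D| / (2 * (1 + |βr|))) (δstar * |D| / (2 * (1 + |P|))) with hhm
  have hmpos : 0 < hm :=
    lt_min (div_pos hDa (by positivity)) (div_pos (mul_pos hδ hDa) (by positivity))
  have hcommon : ∀ ρ : ℚ, ∀ h : ℝ, h = (ρ:ℝ) - ρ₀ → |h| < hm → 0 < (-h * P) * D →
      ((ρ:ℝ) * βr - β0r ≠ 0) ∧
      0 < (lam0 - (ρ:ℝ) * P) / ((ρ:ℝ) * βr - β0r) ∧
      (lam0 - (ρ:ℝ) * P) / ((ρ:ℝ) * βr - β0r) < δstar := by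
    intro ρ h hh hhm2 hsgn
    have hb1 : |h| < |D| / (2 * (1 + |βr|)) := lt_of_lt_of_le hhm2 (min_le_left _ _)
    have hb2 : |h| < δstar * |D| / (2 * (1 + |P|)) := lt_of_lt_of_le hhm2 (min_le_right _ _)
    obtain ⟨c1, c2, c3⟩ := core_est D βr P δstar h hD hδ hb1 hb2 hsgn
    have hnum : lam0 - (ρ:ℝ) * P = -h * P := by rw [hlam0, hh]; ring
    have hden : (ρ:ℝ) * βr - β0r = D + h * βr := by rw [hD', hh]; ring
    rw [hnum, hden]
    exact ⟨c1, c2, c3⟩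
  rcases lt_or_gt_of_ne (mul_ne_zero hP hD) with hPD | hPD
  · -- P * D < 0 : take ρ > ρ₀ (h > 0)
    obtain ⟨ρ, h1, h2⟩ := exists_rat_btwn (show ρ₀ < ρ₀ + hm by linarith)
    have hhpos : 0 < (ρ:ℝ) - ρ₀ := by linarith
    refine ⟨ρ, hcommon ρ ((ρ:ℝ) - ρ₀) rfl ?_ ?_⟩
    · rw [abs_of_pos hhpos]; linarith
    · nlinarith
  · -- P * D > 0 : take ρ < ρ₀ (h < 0)
    obtain ⟨ρ, h1, h2⟩ := exists_rat_btwn (show ρ₀ - hm < ρ₀ by linarith)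
    have hhneg : (ρ:ℝ) - ρ₀ < 0 := by linarith
    refine ⟨ρ, hcommon ρ ((ρ:ℝ) - ρ₀) rfl ?_ ?_⟩
    · rw [abs_of_neg hhneg]; linarith
    · nlinarith
set_option maxHeartbeats 1000000 in
lemma convexC_aux (n m : ℕ) (A : Fin m → Fin n → ℤ) (c : Fin m → ℝ)
    (C : Set (Fin n → ℝ))
    (hC : C = {x | ∀ i, 0 ≤ (∑ j, (A i j : ℝ) * x j) + c i}) :
    Convex ℝ C := by
  subst hC
  intro x hx y hy a b ha hb hab
  intro i
  have hx' := hx i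
  have hy' := hy i
  have hsum : ∑ j, (A i j : ℝ) * (a • x + b • y) j
      = a * (∑ j, (A i j : ℝ) * x j) + b * (∑ j, (A i j : ℝ) * y j) := by
    rw [Finset.mul_sum, Finset.mul_sum, ← Finset.sum_add_distrib]
    refine Finset.sum_congr rfl fun j _ => ?_
    simp only [Pi.add_apply, Pi.smul_apply, smul_eq_mul]
    ring
  rw [hsum]
  have hexp : a * ((∑ j, (A i j : ℝ) * x j) + c i) + b * ((∑ j, (A i j : ℝ) * y j) + c i)
      = (a * (∑ j, (A i j : ℝ) * x j) + b * (∑ j, (A i j : ℝ) * y j)) + c i := by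
    linear_combination (c i) * hab
  linarith [add_nonneg (mul_nonneg ha hx') (mul_nonneg hb hy'), hexp]

set_option maxHeartbeats 2000000 in
lemma claimAux (n m : ℕ) (A : Fin m → Fin n → ℤ) (c : Fin m → ℝ)
    (C : Set (Fin n → ℝ))
    (hC : C = {x | ∀ i, 0 ≤ (∑ j, (A i j : ℝ) * x j) + c i})
    (f : (Fin n → ℝ) → ℝ)
    (hcont : ∀ x ∈ C, ∀ a : Fin n → ℚ,
      ContinuousOn (fun t : ℝ => f (x + t • fun i => ((a i : ℝ))))
        {t : ℝ | (x + t • fun i => ((a i : ℝ))) ∈ C})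
    (hconv : ∀ x ∈ C, ∀ a : Fin n → ℚ,
      ConvexOn ℝ {t : ℝ | (x + t • fun i => ((a i : ℝ))) ∈ C}
        (fun t : ℝ => f (x + t • fun i => ((a i : ℝ))))) :
    ∀ (k : ℕ) (x : Fin n → ℝ), x ∈ C → ∀ (y : Fin n → ℝ), y ∈ C →
      ∀ (lam : Fin k → ℝ) (q : Fin k → (Fin n → ℚ)),
        y = x + ∑ l, lam l • (fun j => ((q l j : ℝ))) →
        ∀ (a b : ℝ), 0 ≤ a → 0 ≤ b → a + b = 1 →
          f (a • x + b • y) ≤ a * f x + b * f y := by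
  have hCmem : ∀ z : Fin n → ℝ, z ∈ C ↔ ∀ i, 0 ≤ (∑ j, (A i j : ℝ) * z j) + c i := by
    rw [hC]; intro z; exact Iff.rfl
  have hCconv : Convex ℝ C := convexC_aux n m A c C hC
  intro k
  induction k with
  | zero =>
    intro x hx y hy lam q hrep a b ha hb hab
    have hxy : y = x := by rw [hrep]; simp
    rw [hxy, Convex.combo_self hab]
    have h1 : a * f x + b * f x = f x := by rw [← add_mul, hab, one_mul]
    linarith
  | succ k IH =>
    intro x hx y hy lam q hrep a b ha hb hab
    classical
    by_cases hzero : ∃ l₀, lam l₀ = 0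
    · obtain ⟨l₀, hl₀⟩ := hzero
      refine IH x hx y hy (fun i => lam (l₀.succAbove i)) (fun i => q (l₀.succAbove i)) ?_
        a b ha hb hab
      rw [hrep,
        Fin.sum_univ_succAbove (fun l => lam l • ((fun j => ((q l j : ℝ))) : Fin n → ℝ)) l₀,
        hl₀, zero_smul, zero_add]
    push_neg at hzero
    -- coordinates of y
    have hyj : ∀ j, y j = x j + ∑ l, lam l * ((q l j : ℝ)) := by
      intro j
      rw [hrep]
      simp [Finset.sum_apply]
    -- value of the tight rows at -lam
    have hμrow : ∀ i : Fin m, ((∑ j, (A i j : ℝ) * y j) + c i = 0) →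
        ∑ l, (∑ j, (A i j : ℝ) * ((q l j : ℝ))) * (-lam l)
          = (∑ j, (A i j : ℝ) * x j) + c i := by
      intro i hi
      have h1 : ∑ l, (∑ j, (A i j : ℝ) * ((q l j : ℝ))) * (-lam l)
          = ∑ j, (A i j : ℝ) * (x j - y j) := by
        calc ∑ l, (∑ j, (A i j : ℝ) * ((q l j : ℝ))) * (-lam l)
            = ∑ l, ∑ j, ((A i j : ℝ) * ((q l j : ℝ))) * (-lam l) :=
              Finset.sum_congr rfl fun l _ => Finset.sum_mul _ _ _
          _ = ∑ j, ∑ l, ((A i j : ℝ) * ((q l j : ℝ))) * (-lam l) := Finset.sum_comm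
          _ = ∑ j, (A i j : ℝ) * (x j - y j) := by
              refine Finset.sum_congr rfl fun j _ => ?_
              have h2 : x j - y j = -(∑ l, lam l * ((q l j : ℝ))) := by rw [hyj j]; ring
              rw [h2, mul_neg, Finset.mul_sum, ← Finset.sum_neg_distrib]
              exact Finset.sum_congr rfl fun l _ => by ring
      rw [h1]
      have h3 : ∑ j, (A i j : ℝ) * (x j - y j)
          = (∑ j, (A i j : ℝ) * x j) - (∑ j, (A i j : ℝ) * y j) := by
        rw [← Finset.sum_sub_distrib]
        exact Finset.sum_congr rfl fun j _ => by ring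
      rw [h3]
      linarith
    -- get the rational feasible perturbation direction
    have hne : (Finset.univ : Finset (Fin (k+1))).Nonempty := ⟨0, Finset.mem_univ 0⟩
    set ε₀ : ℝ := Finset.univ.inf' hne (fun l => |lam l|) with hε₀
    have hε₀pos : 0 < ε₀ := by
      rw [hε₀, Finset.lt_inf'_iff]
      exact fun l _ => abs_pos.mpr (hzero l)
    set r : Matrix {i : Fin m // (∑ j, (A i j : ℝ) * y j) + c i = 0} (Fin (k+1)) ℚ :=
      Matrix.of (fun i l => ∑ j, (A i.1 j : ℚ) * q l j) with hr
    have hrcast : ∀ (i : {i : Fin m // (∑ j, (A i j : ℝ) * y j) + c i = 0}) l,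
        ((r i l : ℚ) : ℝ) = ∑ j, (A i.1 j : ℝ) * ((q l j : ℝ)) := by
      intro i l
      rw [hr]
      simp only [Matrix.of_apply]
      push_cast
      rfl
    have hrows : ∀ i, 0 ≤ (r.map ((↑) : ℚ → ℝ)).mulVec (fun l => -lam l) i := by
      intro i
      have h4 : (r.map ((↑) : ℚ → ℝ)).mulVec (fun l => -lam l) i
          = ∑ l, (∑ j, (A i.1 j : ℝ) * ((q l j : ℝ))) * (-lam l) := by
        simp only [Matrix.mulVec, dotProduct, Matrix.map_apply]
        exact Finset.sum_congr rfl fun l _ => by rw [hrcast]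
      rw [h4, hμrow i.1 i.2]
      exact (hCmem x).mp hx i.1
    obtain ⟨β, hβfeas, hβnear⟩ := ratConeApprox r (fun l => -lam l) hrows hε₀pos
    have hβne : ∀ l, ((β l : ℚ) : ℝ) ≠ 0 := by
      intro l h0
      have h5 := hβnear l
      rw [h0] at h5
      simp only [zero_sub, neg_neg] at h5
      have h6 : ε₀ ≤ |lam l| := Finset.inf'_le _ (Finset.mem_univ l)
      linarith
    set bq : Fin n → ℚ := fun j => ∑ l, β l * q l j with hbq
    have hbqcast : ∀ j, ((bq j : ℚ) : ℝ) = ∑ l, ((β l : ℝ)) * ((q l j : ℝ)) := by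
      intro j
      rw [hbq]
      push_cast
      rfl
    -- feasibility of the direction bq at tight rows of y
    have hfeas : ∀ i : Fin m, ((∑ j, (A i j : ℝ) * y j) + c i = 0) →
        0 ≤ ∑ j, (A i j : ℝ) * ((bq j : ℝ)) := by
      intro i hi
      have h3 := hβfeas ⟨i, hi⟩
      have h4 : (r.map ((↑) : ℚ → ℝ)).mulVec (fun l => ((β l : ℝ))) ⟨i, hi⟩
          = ∑ l, (∑ j, (A i j : ℝ) * ((q l j : ℝ))) * ((β l : ℝ)) := by
        simp only [Matrix.mulVec, dotProduct, Matrix.map_apply]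
        exact Finset.sum_congr rfl fun l _ => by
          rw [hrcast ⟨i, hi⟩ l]
      have h5 : ∑ l, (∑ j, (A i j : ℝ) * ((q l j : ℝ))) * ((β l : ℝ))
          = ∑ j, (A i j : ℝ) * ((bq j : ℝ)) := by
        calc ∑ l, (∑ j, (A i j : ℝ) * ((q l j : ℝ))) * ((β l : ℝ))
            = ∑ l, ∑ j, ((A i j : ℝ) * ((q l j : ℝ))) * ((β l : ℝ)) :=
              Finset.sum_congr rfl fun l _ => Finset.sum_mul _ _ _
          _ = ∑ j, ∑ l, ((A i j : ℝ) * ((q l j : ℝ))) * ((β l : ℝ)) := Finset.sum_comm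
          _ = ∑ j, (A i j : ℝ) * ((bq j : ℝ)) := by
              refine Finset.sum_congr rfl fun j _ => ?_
              rw [hbqcast j, Finset.mul_sum]
              exact Finset.sum_congr rfl fun l _ => by ring
      rw [h4, h5] at h3
      exact h3
    -- a uniform bound δ so that y + s • bq stays in C for 0 ≤ s ≤ δ
    set vy : Fin m → ℝ := fun i => (∑ j, (A i j : ℝ) * y j) + c i with hvy
    set Lb : Fin m → ℝ := fun i => ∑ j, (A i j : ℝ) * ((bq j : ℝ)) with hLb
    set δf2 : Fin m → ℝ := fun i => if vy i = 0 then 1 else vy i / (1 + |Lb i|) with hδf2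
    set δ : ℝ := if hmne : (Finset.univ : Finset (Fin m)).Nonempty
      then Finset.univ.inf' hmne δf2 else 1 with hδdef
    have hδf2pos : ∀ i, 0 < δf2 i := by
      intro i
      simp only [hδf2]
      by_cases ht : vy i = 0
      · rw [if_pos ht]; norm_num
      · rw [if_neg ht]
        have h7 : 0 ≤ vy i := (hCmem y).mp hy i
        have h8 : 0 < vy i := lt_of_le_of_ne h7 (Ne.symm ht)
        have h9 : (0:ℝ) < 1 + |Lb i| := by positivity
        exact div_pos h8 h9
    have hδpos : 0 < δ := by
      rw [hδdef]
      split
      · rw [Finset.lt_inf'_iff]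
        exact fun i _ => hδf2pos i
      · norm_num
    have hYs : ∀ s : ℝ, 0 ≤ s → s ≤ δ → (y + s • ((fun i => ((bq i : ℝ))) : Fin n → ℝ)) ∈ C := by
      intro s h0 h1
      rw [hCmem]
      intro i
      have hcoord : (∑ j, (A i j : ℝ) * ((y + s • ((fun i' => ((bq i' : ℝ))) : Fin n → ℝ)) j)) + c i
          = vy i + s * Lb i := by
        simp only [hvy, hLb]
        have h2 : ∀ j, (A i j : ℝ) * ((y + s • ((fun i' => ((bq i' : ℝ))) : Fin n → ℝ)) j)
            = (A i j : ℝ) * y j + s * ((A i j : ℝ) * ((bq j : ℝ))) := by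
          intro j
          simp only [Pi.add_apply, Pi.smul_apply, smul_eq_mul]
          ring
        rw [Finset.sum_congr rfl fun j _ => h2 j, Finset.sum_add_distrib, ← Finset.mul_sum]
        ring
      rw [hcoord]
      by_cases ht : vy i = 0
      · rw [ht, zero_add]
        have h3 : 0 ≤ Lb i := hfeas i ht
        exact mul_nonneg h0 h3
      · have h7 : 0 < vy i := lt_of_le_of_ne ((hCmem y).mp hy i) (Ne.symm ht)
        have hmne : (Finset.univ : Finset (Fin m)).Nonempty := ⟨i, Finset.mem_univ i⟩
        have h3 : δ ≤ δf2 i := by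
          rw [hδdef, dif_pos hmne]
          exact Finset.inf'_le _ (Finset.mem_univ i)
        have h4 : δf2 i = vy i / (1 + |Lb i|) := by simp only [hδf2]; rw [if_neg ht]
        have h5 : s ≤ vy i / (1 + |Lb i|) := le_trans h1 (h3.trans_eq h4)
        have h9 : (0:ℝ) < 1 + |Lb i| := by positivity
        have h6 : s * (1 + |Lb i|) ≤ vy i := by
          rw [← div_mul_cancel₀ (vy i) (ne_of_gt h9)]
          exact mul_le_mul_of_nonneg_right h5 h9.le
        have h10 : -(s * Lb i) ≤ s * |Lb i| := by
          rw [← mul_neg]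
          exact mul_le_mul_of_nonneg_left (neg_le_abs _) h0
        nlinarith [abs_nonneg (Lb i)]
    have hZ0C : a • x + b • y ∈ C := hCconv hx hy ha hb hab
    have hb1 : b ≤ 1 := by linarith
    -- split: parallel case vs merge case
    by_cases hpar : ∀ l, lam l * ((β 0 : ℝ)) = lam 0 * ((β l : ℝ))
    · -- parallel: direction of y - x is `bq`, a rational direction; use hconv directly
      set τ : ℝ := lam 0 / ((β 0 : ℝ)) with hτ
      have hlaml : ∀ l, lam l = τ * ((β l : ℝ)) := by
        intro l
        rw [hτ]
        field_simp [hβne 0]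
        linear_combination hpar l
      have hyrep : y = x + τ • ((fun i => ((bq i : ℝ))) : Fin n → ℝ) := by
        funext j
        rw [Pi.add_apply, Pi.smul_apply, smul_eq_mul, hyj j, hbqcast j, Finset.mul_sum]
        congr 1
        exact Finset.sum_congr rfl fun l _ => by rw [hlaml l]; ring
      have hmem0 : (0:ℝ) ∈ {t : ℝ | (x + t • fun i => ((bq i : ℝ))) ∈ C} := by
        show (x + (0:ℝ) • fun i => ((bq i : ℝ))) ∈ C
        simpa using hx
      have hmemτ : τ ∈ {t : ℝ | (x + t • fun i => ((bq i : ℝ))) ∈ C} := by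
        show (x + τ • fun i => ((bq i : ℝ))) ∈ C
        rw [← hyrep]
        exact hy
      have hkey := (hconv x hx bq).2 hmem0 hmemτ ha hb hab
      simp only [smul_eq_mul] at hkey
      have e1 : x + (a * 0 + b * τ) • ((fun i => ((bq i : ℝ))) : Fin n → ℝ) = a • x + b • y := by
        have h2 : a * 0 + b * τ = b * τ := by ring
        rw [h2, hyrep, smul_add, smul_smul, ← add_assoc, Convex.combo_self hab]
      have e2 : x + (0:ℝ) • ((fun i => ((bq i : ℝ))) : Fin n → ℝ) = x := by simp
      have e3 : x + τ • ((fun i => ((bq i : ℝ))) : Fin n → ℝ) = y := hyrep.symm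
      rw [e1, e2, e3] at hkey
      exact hkey
    · -- merge case
      push_neg at hpar
      obtain ⟨l₀, hl₀ne⟩ := hpar
      have hl₀0 : l₀ ≠ 0 := by
        intro h
        rw [h] at hl₀ne
        exact hl₀ne rfl
      obtain ⟨l₀', hl₀'⟩ := Fin.eq_succ_of_ne_zero hl₀0
      apply le_of_forall_pos_le_add
      intro ε hε
      have hcy0 : (0:ℝ) ∈ {t : ℝ | (y + t • fun i => ((bq i : ℝ))) ∈ C} := by
        show (y + (0:ℝ) • fun i => ((bq i : ℝ))) ∈ C
        simpa using hy
      have hcz0 : (0:ℝ) ∈ {t : ℝ | ((a • x + b • y) + t • fun i => ((bq i : ℝ))) ∈ C} := by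
        show ((a • x + b • y) + (0:ℝ) • fun i => ((bq i : ℝ))) ∈ C
        simpa using hZ0C
      obtain ⟨η, hηpos, hη⟩ :=
        (Metric.continuousWithinAt_iff.mp (hcont y hy bq 0 hcy0)) (ε/2) (by linarith)
      obtain ⟨η', hη'pos, hη'⟩ :=
        (Metric.continuousWithinAt_iff.mp (hcont (a • x + b • y) hZ0C bq 0 hcz0)) (ε/2)
          (by linarith)
      set δstar : ℝ := min δ (min η η') with hδstar
      have hδstarpos : 0 < δstar := lt_min hδpos (lt_min hηpos hη'pos)
      obtain ⟨ρ, hden0, hspos, hslt⟩ :=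
        pick_s (lam l₀) ((β 0 : ℝ)) ((β l₀ : ℝ)) (lam 0) δstar (hzero l₀) hδstarpos hl₀ne
      set s : ℝ := (lam 0 - (ρ:ℝ) * lam l₀) / ((ρ:ℝ) * ((β l₀ : ℝ)) - ((β 0 : ℝ))) with hs
      have hsδ : s ≤ δ := le_trans hslt.le (min_le_left _ _)
      have hsη : s < η := lt_of_lt_of_le hslt (le_trans (min_le_right _ _) (min_le_left _ _))
      have hsη' : s < η' := lt_of_lt_of_le hslt (le_trans (min_le_right _ _) (min_le_right _ _))
      have hYC : (y + s • ((fun i => ((bq i : ℝ))) : Fin n → ℝ)) ∈ C := hYs s hspos.le hsδ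
      have hmerge : lam 0 + s * ((β 0 : ℝ)) = (ρ:ℝ) * (lam l₀ + s * ((β l₀ : ℝ))) := by
        have h1 : s * ((ρ:ℝ) * ((β l₀ : ℝ)) - ((β 0 : ℝ))) = lam 0 - (ρ:ℝ) * lam l₀ := by
          rw [hs]
          exact div_mul_cancel₀ _ hden0
        linear_combination (-1 : ℝ) * h1
      clear_value s
      -- the merged representation with k directions
      set lam' : Fin k → ℝ := fun i => lam i.succ + s * ((β i.succ : ℝ)) with hlam'
      set q' : Fin k → (Fin n → ℚ) :=
        fun i => if i = l₀' then (fun j => ρ * q 0 j + q l₀ j) else q i.succ with hq'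
      have hrep' : y + s • ((fun i => ((bq i : ℝ))) : Fin n → ℝ)
          = x + ∑ i, lam' i • ((fun j => ((q' i j : ℝ))) : Fin n → ℝ) := by
        funext j
        simp only [Pi.add_apply, Pi.smul_apply, smul_eq_mul, Finset.sum_apply]
        rw [hyj j, hbqcast j]
        have hRHS : ∑ i, lam' i * ((q' i j : ℝ))
            = ∑ i, ((lam i.succ + s * ((β i.succ : ℝ))) * ((q i.succ j : ℝ))
                + (if i = l₀' then (lam 0 + s * ((β 0 : ℝ))) * ((q 0 j : ℝ)) else 0)) := by
          refine Finset.sum_congr rfl fun i _ => ?_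
          by_cases hi : i = l₀'
          · subst hi
            simp only [hq', hlam', eq_self_iff_true, if_true]
            have hc : ((ρ * q 0 j + q l₀ j : ℚ) : ℝ)
                = (ρ:ℝ) * ((q 0 j : ℝ)) + ((q l₀ j : ℝ)) := by push_cast; ring
            rw [hc, ← hl₀']
            linear_combination (-((q 0 j : ℝ))) * hmerge
          · simp only [hq', hlam', if_neg hi, add_zero]
        rw [hRHS, Finset.sum_add_distrib, Finset.sum_ite_eq' Finset.univ l₀'
          (fun _ => (lam 0 + s * ((β 0 : ℝ))) * ((q 0 j : ℝ)))]
        simp only [Finset.mem_univ, if_true]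
        have hcomb : ∑ l, lam l * ((q l j : ℝ)) + s * ∑ l, ((β l : ℝ)) * ((q l j : ℝ))
            = ∑ l : Fin (k+1), (lam l + s * ((β l : ℝ))) * ((q l j : ℝ)) := by
          rw [Finset.mul_sum, ← Finset.sum_add_distrib]
          exact Finset.sum_congr rfl fun l _ => by ring
        rw [Fin.sum_univ_succ (fun l => (lam l + s * ((β l : ℝ))) * ((q l j : ℝ)))] at hcomb
        linarith [hcomb]
      have hkey := IH x hx (y + s • ((fun i => ((bq i : ℝ))) : Fin n → ℝ)) hYC lam' q' hrep'
        a b ha hb hab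
      have hZeq : a • x + b • (y + s • ((fun i => ((bq i : ℝ))) : Fin n → ℝ))
          = (a • x + b • y) + (b * s) • ((fun i => ((bq i : ℝ))) : Fin n → ℝ) := by
        rw [smul_add, smul_smul, add_assoc]
      have hmemy : s ∈ {t : ℝ | (y + t • fun i => ((bq i : ℝ))) ∈ C} := hYC
      have hmemz : (b * s) ∈ {t : ℝ | ((a • x + b • y) + t • fun i => ((bq i : ℝ))) ∈ C} := by
        show ((a • x + b • y) + (b * s) • fun i => ((bq i : ℝ))) ∈ C
        rw [← hZeq]
        exact hCconv hx hYC ha hb hab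
      have hdy : dist s 0 < η := by
        rw [Real.dist_eq, sub_zero, abs_of_pos hspos]
        exact hsη
      have hdz : dist (b * s) 0 < η' := by
        rw [Real.dist_eq, sub_zero, abs_of_nonneg (mul_nonneg hb hspos.le)]
        calc b * s ≤ 1 * s := mul_le_mul_of_nonneg_right hb1 hspos.le
          _ = s := one_mul s
          _ < η' := hsη'
      have hy2 := hη hmemy hdy
      have hz2 := hη' hmemz hdz
      simp only [Real.dist_eq] at hy2 hz2
      have e0 : y + (0:ℝ) • ((fun i => ((bq i : ℝ))) : Fin n → ℝ) = y := by simp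
      have e0' : (a • x + b • y) + (0:ℝ) • ((fun i => ((bq i : ℝ))) : Fin n → ℝ)
          = a • x + b • y := by simp
      rw [e0] at hy2
      rw [e0'] at hz2
      have hy3 : f (y + s • ((fun i => ((bq i : ℝ))) : Fin n → ℝ)) ≤ f y + ε/2 := by
        have := (abs_lt.mp hy2).2
        linarith
      have hz3 : f (a • x + b • y)
          ≤ f ((a • x + b • y) + (b * s) • ((fun i => ((bq i : ℝ))) : Fin n → ℝ)) + ε/2 := by
        have := (abs_lt.mp hz2).1
        linarith
      rw [hZeq] at hkey
      have hmul : b * f (y + s • ((fun i => ((bq i : ℝ))) : Fin n → ℝ)) ≤ b * (f y + ε/2) :=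
        mul_le_mul_of_nonneg_left hy3 hb
      have hbε : b * (ε/2) ≤ ε/2 := by nlinarith
      calc f (a • x + b • y)
          ≤ f ((a • x + b • y) + (b * s) • ((fun i => ((bq i : ℝ))) : Fin n → ℝ)) + ε/2 := hz3
        _ ≤ (a * f x + b * f (y + s • ((fun i => ((bq i : ℝ))) : Fin n → ℝ))) + ε/2 := by
            linarith [hkey]
        _ ≤ a * f x + b * f y + ε := by
            have := hmul
            nlinarith [hbε]

/-- Lemma (`L:trp1 convex`): let `C ⊆ ℝⁿ` be a transrational polyhedral set
(finitely many half-spaces with integer slope vectors and real constants), and let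
`f : C → ℝ` be convex transintegral polyhedral in dimension 1: for each `x ∈ C` and
rational direction `a ∈ ℚⁿ`, on the interval `I = {t : x + ta ∈ C}` the function
`g(t) = f(x + ta)` is continuous, convex, and piecewise affine with finitely many
slopes, all lying in `a₁ℤ + ⋯ + aₙℤ` (encoded via its right derivatives, given for
a convex function by the infimum of forward difference quotients, taking values in
a finite set of such numbers).  Then `f` is convex on `C`. -/
theorem convex_of_dim_one_transintegral
    (n m : ℕ) (A : Fin m → Fin n → ℤ) (c : Fin m → ℝ)
    (C : Set (Fin n → ℝ))
    (hC : C = {x | ∀ i, 0 ≤ (∑ j, (A i j : ℝ) * x j) + c i})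
    (f : (Fin n → ℝ) → ℝ)
    (hdim1 : ∀ x ∈ C, ∀ a : Fin n → ℚ,
      ContinuousOn (fun t : ℝ => f (x + t • fun i => ((a i : ℝ))))
        {t : ℝ | (x + t • fun i => ((a i : ℝ))) ∈ C} ∧
      ConvexOn ℝ {t : ℝ | (x + t • fun i => ((a i : ℝ))) ∈ C}
        (fun t : ℝ => f (x + t • fun i => ((a i : ℝ)))) ∧
      ∃ S : Finset ℝ,
        (∀ s ∈ S, ∃ mv : Fin n → ℤ, s = ∑ i, (mv i : ℝ) * (a i : ℝ)) ∧
        ∀ t ∈ {t : ℝ | (x + t • fun i => ((a i : ℝ))) ∈ C},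
          (∃ t' ∈ {t : ℝ | (x + t • fun i => ((a i : ℝ))) ∈ C}, t < t') →
          sInf {q : ℝ | ∃ t' ∈ {t : ℝ | (x + t • fun i => ((a i : ℝ))) ∈ C},
              t < t' ∧ q = (f (x + t' • fun i => ((a i : ℝ))) -
                f (x + t • fun i => ((a i : ℝ)))) / (t' - t)} ∈ S) :
    ConvexOn ℝ C f := by
  have hcont := fun x hx a => (hdim1 x hx a).1
  have hconv := fun x hx a => (hdim1 x hx a).2.1
  refine ⟨convexC_aux n m A c C hC, ?_⟩
  intro x hx y hy a b ha hb hab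
  have hrep : y = x + ∑ l : Fin n, (y l - x l) •
      ((fun j => ((((fun l' j' => if l' = j' then (1:ℚ) else 0) : Fin n → Fin n → ℚ) l j : ℝ)))
        : Fin n → ℝ) := by
    funext j
    simp only [Pi.add_apply, Finset.sum_apply, Pi.smul_apply, smul_eq_mul]
    have h1 : ∀ l : Fin n, (y l - x l) * ((if l = j then (1:ℚ) else (0:ℚ) : ℚ) : ℝ)
        = if l = j then y l - x l else 0 := by
      intro l
      by_cases hl : l = j
      · rw [if_pos hl, if_pos hl]; norm_num
      · rw [if_neg hl, if_neg hl]; norm_num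
    rw [Finset.sum_congr rfl fun l _ => h1 l, Finset.sum_ite_eq' Finset.univ j
      (fun l => y l - x l)]
    simp
  have hmain := claimAux n m A c C hC f hcont hconv n x hx y hy
    (fun l => y l - x l) ((fun l' j' => if l' = j' then (1:ℚ) else 0) : Fin n → Fin n → ℚ)
    hrep a b ha hb hab
  simpa [smul_eq_mul] using hmain
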